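/- The first Brocard triangle A₁B₁C₁ of a triangle ABC is similar to ABC: the angle of A₁B₁C₁ at A₁ equals the angle of ABC at A, the angle at B₁ equals the angle at B, and the angle at C₁ equals the angle at C. -/

import Mathlib

open EuclideanGeometry Real Affine
open scoped RealInnerProductSpace

noncomputable section

abbrev Pt := EuclideanSpace ℝ (Fin 2)

set_option maxHeartbeats 1600000

private lemma distsq_coord (P Q : Pt) :
    dist P Q ^ 2 = (P 0 - Q 0)^2 + (P 1 - Q 1)^2 := by
  rw [EuclideanSpace.dist_eq, Real.sq_sqrt (by positivity)]
  simp [Fin.sum_univ_two, Real.dist_eq, sq_abs]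

private lemma sq_cancel {a b : ℝ} (ha : 0 ≤ a) (hb : 0 ≤ b) (h : a^2 = b^2) : a = b := by
  nlinarith [sq_nonneg (a - b), sq_nonneg (a + b)]

private lemma angle_of_ratio {V : Type*} [NormedAddCommGroup V] [InnerProductSpace ℝ V]
    (u v u' v' : V) (k : ℝ) (hk : k ≠ 0) (h1 : ‖u'‖ = k*‖u‖) (h2 : ‖v'‖ = k*‖v‖)
    (h3 : ‖u' - v'‖ = k*‖u - v‖) :
    InnerProductGeometry.angle u' v' = InnerProductGeometry.angle u v := by
  unfold InnerProductGeometry.angle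
  have e1 : (⟪u', v'⟫) = k^2 * (⟪u, v⟫) := by
    have a := norm_sub_sq_real u v
    have b := norm_sub_sq_real u' v'
    rw [h1, h2, h3] at b
    nlinarith [a, b]
  rw [e1, h1, h2]
  congr 1
  rw [mul_mul_mul_comm, ← sq]
  rw [mul_div_mul_left _ _ (pow_ne_zero 2 hk)]


private lemma brocard_core (a0 a1 b0 b1 k0 k1 x0 x1 y0 y1 z0 z1 ta tb tc : ℝ)
    (hα : (b0^2+b1^2) ≠ 0) (hβ : (a0^2+a1^2) ≠ 0) (hγ : ((a0-b0)^2+(a1-b1)^2) ≠ 0)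
    (H2 : (x0-b0)^2+(x1-b1)^2 = x0^2+x1^2)
    (H30 : k0 - x0 = ta*b0) (H31 : k1 - x1 = ta*b1)
    (H4 : y0^2+y1^2 = (y0-a0)^2+(y1-a1)^2)
    (H50 : k0 - y0 = tb*(0-a0)) (H51 : k1 - y1 = tb*(0-a1))
    (H6 : (z0-a0)^2+(z1-a1)^2 = (z0-b0)^2+(z1-b1)^2)
    (H70 : k0 - z0 = tc*(a0-b0)) (H71 : k1 - z1 = tc*(a1-b1)) :
    ((y0-z0)^2+(y1-z1)^2) * ((a0-b0)^2+(a1-b1)^2) = ((x0-y0)^2+(x1-y1)^2) * (b0^2+b1^2)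
      ∧ ((x0-z0)^2+(x1-z1)^2) * ((a0-b0)^2+(a1-b1)^2) = ((x0-y0)^2+(x1-y1)^2) * (a0^2+a1^2) := by
  have hx0 : x0 = k0 - ta*b0 := by linarith
  have hx1 : x1 = k1 - ta*b1 := by linarith
  have hy0 : y0 = k0 + tb*a0 := by linarith
  have hy1 : y1 = k1 + tb*a1 := by linarith
  have hz0 : z0 = k0 - tc*(a0-b0) := by linarith
  have hz1 : z1 = k1 - tc*(a1-b1) := by linarith
  rw [hx0, hx1] at H2
  rw [hy0, hy1] at H4
  rw [hz0, hz1] at H6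
  have G1 : ta*(b0^2+b1^2) = (k0-b0/2)*b0+(k1-b1/2)*b1 := by linear_combination (1/2) * H2
  have G2 : tb*(a0^2+a1^2) = (k0-a0/2)*(0-a0)+(k1-a1/2)*(0-a1) := by
    linear_combination (1/2) * H4
  have G3 : tc*((a0-b0)^2+(a1-b1)^2) = (k0-(a0+b0)/2)*(a0-b0)+(k1-(a1+b1)/2)*(a1-b1) := by
    linear_combination (1/2) * H6
  have hM : (b0^2+b1^2) * (a0^2+a1^2) * ((a0-b0)^2+(a1-b1)^2) ≠ 0 := mul_ne_zero (mul_ne_zero hα hβ) hγ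
  have RB0 : (y0-z0) * ((a0-b0)^2+(a1-b1)^2) = (((x0-y0)*(a0-b0)-(x1-y1)*(a1-b1))*b0 + ((x0-y0)*(a1-b1)+(x1-y1)*(a0-b0))*b1) := by
    apply mul_right_cancel₀ hM
    simp only [hx0, hx1, hy0, hy1, hz0, hz1]
    linear_combination (-1*a1^2*b0*b1^4 - 2*a1^2*b0^3*b1^2 - 1*a1^2*b0^5 + 2*a1^3*b0*b1^3 + 2*a1^3*b0^3*b1 - 1*a1^4*b0*b1^2 - 1*a1^4*b0^3 + 1*a0*a1^2*b1^4 + 4*a0*a1^2*b0^2*b1^2 + 3*a0*a1^2*b0^4 - 2*a0*a1^3*b1^3 - 2*a0*a1^3*b0^2*b1 + 1*a0*a1^4*b1^2 + 1*a0*a1^4*b0^2 - 1*a0^2*b0*b1^4 - 2*a0^2*b0^3*b1^2 - 1*a0^2*b0^5 + 2*a0^2*a1*b0*b1^3 + 2*a0^2*a1*b0^3*b1 - 4*a0^2*a1^2*b0*b1^2 - 4*a0^2*a1^2*b0^3 + 1*a0^3*b1^4 + 4*a0^3*b0^2*b1^2 + 3*a0^3*b0^4 - 2*a0^3*a1*b1^3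 - 2*a0^3*a1*b0^2*b1 + 2*a0^3*a1^2*b1^2 + 2*a0^3*a1^2*b0^2 - 3*a0^4*b0*b1^2 - 3*a0^4*b0^3 + 1*a0^5*b1^2 + 1*a0^5*b0^2) * G1 + (-1*a1^2*b0*b1^4 - 2*a1^2*b0^3*b1^2 - 1*a1^2*b0^5 + 2*a1^3*b0*b1^3 + 2*a1^3*b0^3*b1 - 1*a1^4*b0*b1^2 - 1*a1^4*b0^3 + 1*a0*a1^2*b1^4 + 4*a0*a1^2*b0^2*b1^2 + 3*a0*a1^2*b0^4 - 2*a0*a1^3*b1^3 - 2*a0*a1^3*b0^2*b1 + 1*a0*a1^4*b1^2 + 1*a0*a1^4*b0^2 - 1*a0^2*b0*b1^4 - 2*a0^2*b0^3*b1^2 - 1*a0^2*b0^5 + 2*a0^2*a1*b0*b1^3 + 2*a0^2*a1*b0^3*b1 - 4*a0^2*a1^2*b0*b1^2 - 4*a0^2*a1^2*b0^3 + 1*a0^3*b1^4 + 4*a0^3*b0^2*b1^2 + 3*a0^3*b0^4 - 2*a0^3*a1*b1^3 - 2*a0^3*a1*b0^2*b1 + 2*a0^3*a1^2*b1^2 +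 2*a0^3*a1^2*b0^2 - 3*a0^4*b0*b1^2 - 3*a0^4*b0^3 + 1*a0^5*b1^2 + 1*a0^5*b0^2) * G2 + (-1*a1^2*b0*b1^4 - 2*a1^2*b0^3*b1^2 - 1*a1^2*b0^5 + 2*a1^3*b0*b1^3 + 2*a1^3*b0^3*b1 - 1*a1^4*b0*b1^2 - 1*a1^4*b0^3 + 1*a0*a1^2*b1^4 + 4*a0*a1^2*b0^2*b1^2 + 3*a0*a1^2*b0^4 - 2*a0*a1^3*b1^3 - 2*a0*a1^3*b0^2*b1 + 1*a0*a1^4*b1^2 + 1*a0*a1^4*b0^2 - 1*a0^2*b0*b1^4 - 2*a0^2*b0^3*b1^2 - 1*a0^2*b0^5 + 2*a0^2*a1*b0*b1^3 + 2*a0^2*a1*b0^3*b1 - 4*a0^2*a1^2*b0*b1^2 - 4*a0^2*a1^2*b0^3 + 1*a0^3*b1^4 + 4*a0^3*b0^2*b1^2 + 3*a0^3*b0^4 - 2*a0^3*a1*b1^3 - 2*a0^3*a1*b0^2*b1 + 2*a0^3*a1^2*b1^2 + 2*a0^3*a1^2*b0^2 - 3*a0^4*b0*b1^2 - 3*a0^4*b0^3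 + 1*a0^5*b1^2 + 1*a0^5*b0^2) * G3
  have RB1 : (y1-z1) * ((a0-b0)^2+(a1-b1)^2) = (((x0-y0)*(a1-b1)+(x1-y1)*(a0-b0))*b0 - ((x0-y0)*(a0-b0)-(x1-y1)*(a1-b1))*b1) := by
    apply mul_right_cancel₀ hM
    simp only [hx0, hx1, hy0, hy1, hz0, hz1]
    linear_combination (-1*a1^2*b1^5 - 2*a1^2*b0^2*b1^3 - 1*a1^2*b0^4*b1 + 3*a1^3*b1^4 + 4*a1^3*b0^2*b1^2 + 1*a1^3*b0^4 - 3*a1^4*b1^3 - 3*a1^4*b0^2*b1 + 1*a1^5*b1^2 + 1*a1^5*b0^2 + 2*a0*a1^2*b0*b1^3 + 2*a0*a1^2*b0^3*b1 - 2*a0*a1^3*b0*b1^2 - 2*a0*a1^3*b0^3 - 1*a0^2*b1^5 - 2*a0^2*b0^2*b1^3 - 1*a0^2*b0^4*b1 + 3*a0^2*a1*b1^4 + 4*a0^2*a1*b0^2*b1^2 + 1*a0^2*a1*b0^4 - 4*a0^2*a1^2*b1^3 - 4*a0^2*a1^2*b0^2*b1 + 2*a0^2*a1^3*b1^2 + 2*a0^2*a1^3*b0^2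 + 2*a0^3*b0*b1^3 + 2*a0^3*b0^3*b1 - 2*a0^3*a1*b0*b1^2 - 2*a0^3*a1*b0^3 - 1*a0^4*b1^3 - 1*a0^4*b0^2*b1 + 1*a0^4*a1*b1^2 + 1*a0^4*a1*b0^2) * G1 + (-1*a1^2*b1^5 - 2*a1^2*b0^2*b1^3 - 1*a1^2*b0^4*b1 + 3*a1^3*b1^4 + 4*a1^3*b0^2*b1^2 + 1*a1^3*b0^4 - 3*a1^4*b1^3 - 3*a1^4*b0^2*b1 + 1*a1^5*b1^2 + 1*a1^5*b0^2 + 2*a0*a1^2*b0*b1^3 + 2*a0*a1^2*b0^3*b1 - 2*a0*a1^3*b0*b1^2 - 2*a0*a1^3*b0^3 - 1*a0^2*b1^5 - 2*a0^2*b0^2*b1^3 - 1*a0^2*b0^4*b1 + 3*a0^2*a1*b1^4 + 4*a0^2*a1*b0^2*b1^2 + 1*a0^2*a1*b0^4 - 4*a0^2*a1^2*b1^3 - 4*a0^2*a1^2*b0^2*b1 + 2*a0^2*a1^3*b1^2 + 2*a0^2*a1^3*b0^2 + 2*a0^3*b0*b1^3 + 2*a0^3*b0^3*b1 - 2*a0^3*a1*b0*b1^2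 - 2*a0^3*a1*b0^3 - 1*a0^4*b1^3 - 1*a0^4*b0^2*b1 + 1*a0^4*a1*b1^2 + 1*a0^4*a1*b0^2) * G2 + (-1*a1^2*b1^5 - 2*a1^2*b0^2*b1^3 - 1*a1^2*b0^4*b1 + 3*a1^3*b1^4 + 4*a1^3*b0^2*b1^2 + 1*a1^3*b0^4 - 3*a1^4*b1^3 - 3*a1^4*b0^2*b1 + 1*a1^5*b1^2 + 1*a1^5*b0^2 + 2*a0*a1^2*b0*b1^3 + 2*a0*a1^2*b0^3*b1 - 2*a0*a1^3*b0*b1^2 - 2*a0*a1^3*b0^3 - 1*a0^2*b1^5 - 2*a0^2*b0^2*b1^3 - 1*a0^2*b0^4*b1 + 3*a0^2*a1*b1^4 + 4*a0^2*a1*b0^2*b1^2 + 1*a0^2*a1*b0^4 - 4*a0^2*a1^2*b1^3 - 4*a0^2*a1^2*b0^2*b1 + 2*a0^2*a1^3*b1^2 + 2*a0^2*a1^3*b0^2 + 2*a0^3*b0*b1^3 + 2*a0^3*b0^3*b1 - 2*a0^3*a1*b0*b1^2 - 2*a0^3*a1*b0^3 - 1*a0^4*b1^3 - 1*a0^4*b0^2*b1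 + 1*a0^4*a1*b1^2 + 1*a0^4*a1*b0^2) * G3
  have RC0 : (x0-z0) * ((a0-b0)^2+(a1-b1)^2) = (((x0-y0)*(a0-b0)-(x1-y1)*(a1-b1))*a0 + ((x0-y0)*(a1-b1)+(x1-y1)*(a0-b0))*a1) := by
    apply mul_right_cancel₀ hM
    simp only [hx0, hx1, hy0, hy1, hz0, hz1]
    linear_combination (-1*a1^2*b0*b1^4 - 2*a1^2*b0^3*b1^2 - 1*a1^2*b0^5 + 2*a1^3*b0*b1^3 + 2*a1^3*b0^3*b1 - 1*a1^4*b0*b1^2 - 1*a1^4*b0^3 + 1*a0*a1^2*b1^4 + 4*a0*a1^2*b0^2*b1^2 + 3*a0*a1^2*b0^4 - 2*a0*a1^3*b1^3 - 2*a0*a1^3*b0^2*b1 + 1*a0*a1^4*b1^2 + 1*a0*a1^4*b0^2 - 1*a0^2*b0*b1^4 - 2*a0^2*b0^3*b1^2 - 1*a0^2*b0^5 + 2*a0^2*a1*b0*b1^3 + 2*a0^2*a1*b0^3*b1 - 4*a0^2*a1^2*b0*b1^2 - 4*a0^2*a1^2*b0^3 + 1*a0^3*b1^4 + 4*a0^3*b0^2*b1^2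 + 3*a0^3*b0^4 - 2*a0^3*a1*b1^3 - 2*a0^3*a1*b0^2*b1 + 2*a0^3*a1^2*b1^2 + 2*a0^3*a1^2*b0^2 - 3*a0^4*b0*b1^2 - 3*a0^4*b0^3 + 1*a0^5*b1^2 + 1*a0^5*b0^2) * G1 + (-1*a1^2*b0*b1^4 - 2*a1^2*b0^3*b1^2 - 1*a1^2*b0^5 + 2*a1^3*b0*b1^3 + 2*a1^3*b0^3*b1 - 1*a1^4*b0*b1^2 - 1*a1^4*b0^3 + 1*a0*a1^2*b1^4 + 4*a0*a1^2*b0^2*b1^2 + 3*a0*a1^2*b0^4 - 2*a0*a1^3*b1^3 - 2*a0*a1^3*b0^2*b1 + 1*a0*a1^4*b1^2 + 1*a0*a1^4*b0^2 - 1*a0^2*b0*b1^4 - 2*a0^2*b0^3*b1^2 - 1*a0^2*b0^5 + 2*a0^2*a1*b0*b1^3 + 2*a0^2*a1*b0^3*b1 - 4*a0^2*a1^2*b0*b1^2 - 4*a0^2*a1^2*b0^3 + 1*a0^3*b1^4 + 4*a0^3*b0^2*b1^2 + 3*a0^3*b0^4 - 2*a0^3*a1*b1^3 - 2*a0^3*a1*b0^2*b1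 + 2*a0^3*a1^2*b1^2 + 2*a0^3*a1^2*b0^2 - 3*a0^4*b0*b1^2 - 3*a0^4*b0^3 + 1*a0^5*b1^2 + 1*a0^5*b0^2) * G2 + (-1*a1^2*b0*b1^4 - 2*a1^2*b0^3*b1^2 - 1*a1^2*b0^5 + 2*a1^3*b0*b1^3 + 2*a1^3*b0^3*b1 - 1*a1^4*b0*b1^2 - 1*a1^4*b0^3 + 1*a0*a1^2*b1^4 + 4*a0*a1^2*b0^2*b1^2 + 3*a0*a1^2*b0^4 - 2*a0*a1^3*b1^3 - 2*a0*a1^3*b0^2*b1 + 1*a0*a1^4*b1^2 + 1*a0*a1^4*b0^2 - 1*a0^2*b0*b1^4 - 2*a0^2*b0^3*b1^2 - 1*a0^2*b0^5 + 2*a0^2*a1*b0*b1^3 + 2*a0^2*a1*b0^3*b1 - 4*a0^2*a1^2*b0*b1^2 - 4*a0^2*a1^2*b0^3 + 1*a0^3*b1^4 + 4*a0^3*b0^2*b1^2 + 3*a0^3*b0^4 - 2*a0^3*a1*b1^3 - 2*a0^3*a1*b0^2*b1 + 2*a0^3*a1^2*b1^2 + 2*a0^3*a1^2*b0^2 - 3*a0^4*b0*b1^2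 - 3*a0^4*b0^3 + 1*a0^5*b1^2 + 1*a0^5*b0^2) * G3
  have RC1 : (x1-z1) * ((a0-b0)^2+(a1-b1)^2) = (((x0-y0)*(a1-b1)+(x1-y1)*(a0-b0))*a0 - ((x0-y0)*(a0-b0)-(x1-y1)*(a1-b1))*a1) := by
    apply mul_right_cancel₀ hM
    simp only [hx0, hx1, hy0, hy1, hz0, hz1]
    linear_combination (-1*a1^2*b1^5 - 2*a1^2*b0^2*b1^3 - 1*a1^2*b0^4*b1 + 3*a1^3*b1^4 + 4*a1^3*b0^2*b1^2 + 1*a1^3*b0^4 - 3*a1^4*b1^3 - 3*a1^4*b0^2*b1 + 1*a1^5*b1^2 + 1*a1^5*b0^2 + 2*a0*a1^2*b0*b1^3 + 2*a0*a1^2*b0^3*b1 - 2*a0*a1^3*b0*b1^2 - 2*a0*a1^3*b0^3 - 1*a0^2*b1^5 - 2*a0^2*b0^2*b1^3 - 1*a0^2*b0^4*b1 + 3*a0^2*a1*b1^4 + 4*a0^2*a1*b0^2*b1^2 + 1*a0^2*a1*b0^4 - 4*a0^2*a1^2*b1^3 - 4*a0^2*a1^2*b0^2*b1 + 2*a0^2*a1^3*b1^2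 + 2*a0^2*a1^3*b0^2 + 2*a0^3*b0*b1^3 + 2*a0^3*b0^3*b1 - 2*a0^3*a1*b0*b1^2 - 2*a0^3*a1*b0^3 - 1*a0^4*b1^3 - 1*a0^4*b0^2*b1 + 1*a0^4*a1*b1^2 + 1*a0^4*a1*b0^2) * G1 + (-1*a1^2*b1^5 - 2*a1^2*b0^2*b1^3 - 1*a1^2*b0^4*b1 + 3*a1^3*b1^4 + 4*a1^3*b0^2*b1^2 + 1*a1^3*b0^4 - 3*a1^4*b1^3 - 3*a1^4*b0^2*b1 + 1*a1^5*b1^2 + 1*a1^5*b0^2 + 2*a0*a1^2*b0*b1^3 + 2*a0*a1^2*b0^3*b1 - 2*a0*a1^3*b0*b1^2 - 2*a0*a1^3*b0^3 - 1*a0^2*b1^5 - 2*a0^2*b0^2*b1^3 - 1*a0^2*b0^4*b1 + 3*a0^2*a1*b1^4 + 4*a0^2*a1*b0^2*b1^2 + 1*a0^2*a1*b0^4 - 4*a0^2*a1^2*b1^3 - 4*a0^2*a1^2*b0^2*b1 + 2*a0^2*a1^3*b1^2 + 2*a0^2*a1^3*b0^2 + 2*a0^3*b0*b1^3 + 2*a0^3*b0^3*b1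 - 2*a0^3*a1*b0*b1^2 - 2*a0^3*a1*b0^3 - 1*a0^4*b1^3 - 1*a0^4*b0^2*b1 + 1*a0^4*a1*b1^2 + 1*a0^4*a1*b0^2) * G2 + (-1*a1^2*b1^5 - 2*a1^2*b0^2*b1^3 - 1*a1^2*b0^4*b1 + 3*a1^3*b1^4 + 4*a1^3*b0^2*b1^2 + 1*a1^3*b0^4 - 3*a1^4*b1^3 - 3*a1^4*b0^2*b1 + 1*a1^5*b1^2 + 1*a1^5*b0^2 + 2*a0*a1^2*b0*b1^3 + 2*a0*a1^2*b0^3*b1 - 2*a0*a1^3*b0*b1^2 - 2*a0*a1^3*b0^3 - 1*a0^2*b1^5 - 2*a0^2*b0^2*b1^3 - 1*a0^2*b0^4*b1 + 3*a0^2*a1*b1^4 + 4*a0^2*a1*b0^2*b1^2 + 1*a0^2*a1*b0^4 - 4*a0^2*a1^2*b1^3 - 4*a0^2*a1^2*b0^2*b1 + 2*a0^2*a1^3*b1^2 + 2*a0^2*a1^3*b0^2 + 2*a0^3*b0*b1^3 + 2*a0^3*b0^3*b1 - 2*a0^3*a1*b0*b1^2 - 2*a0^3*a1*b0^3 - 1*a0^4*b1^3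 - 1*a0^4*b0^2*b1 + 1*a0^4*a1*b1^2 + 1*a0^4*a1*b0^2) * G3
  constructor
  · apply mul_right_cancel₀ hγ
    apply mul_right_cancel₀ hγ
    linear_combination ((y0-z0)*((a0-b0)^2+(a1-b1)^2) + (((x0-y0)*(a0-b0)-(x1-y1)*(a1-b1))*b0 + ((x0-y0)*(a1-b1)+(x1-y1)*(a0-b0))*b1))*((a0-b0)^2+(a1-b1)^2)*RB0
      + ((y1-z1)*((a0-b0)^2+(a1-b1)^2) + (((x0-y0)*(a1-b1)+(x1-y1)*(a0-b0))*b0 - ((x0-y0)*(a0-b0)-(x1-y1)*(a1-b1))*b1))*((a0-b0)^2+(a1-b1)^2)*RB1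
  · apply mul_right_cancel₀ hγ
    apply mul_right_cancel₀ hγ
    linear_combination ((x0-z0)*((a0-b0)^2+(a1-b1)^2) + (((x0-y0)*(a0-b0)-(x1-y1)*(a1-b1))*a0 + ((x0-y0)*(a1-b1)+(x1-y1)*(a0-b0))*a1))*((a0-b0)^2+(a1-b1)^2)*RC0
      + ((x1-z1)*((a0-b0)^2+(a1-b1)^2) + (((x0-y0)*(a1-b1)+(x1-y1)*(a0-b0))*a0 - ((x0-y0)*(a0-b0)-(x1-y1)*(a1-b1))*a1))*((a0-b0)^2+(a1-b1)^2)*RC1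

/-- The first Brocard triangle `A₁B₁C₁` of a (non-equilateral, i.e. `K ≠ O`) triangle
`ABC` is similar to `ABC`: corresponding interior angles are equal. -/
theorem stmt_11 (A B C O K A₁ B₁ C₁ : Pt)
    (hABC : AffineIndependent ℝ ![A, B, C])
    (hK : (dist B C) ^ 2 • (A -ᵥ K) + (dist C A) ^ 2 • (B -ᵥ K) + (dist A B) ^ 2 • (C -ᵥ K)
          = (0 : Pt))
    (hA₁ : A₁ ∈ AffineSubspace.perpBisector B C) (hA₁p : ∃ t : ℝ, K -ᵥ A₁ = t • (B -ᵥ C))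
    (hB₁ : B₁ ∈ AffineSubspace.perpBisector C A) (hB₁p : ∃ t : ℝ, K -ᵥ B₁ = t • (C -ᵥ A))
    (hC₁ : C₁ ∈ AffineSubspace.perpBisector A B) (hC₁p : ∃ t : ℝ, K -ᵥ C₁ = t • (A -ᵥ B))
    (hO1 : dist O A = dist O B) (hO2 : dist O B = dist O C)
    (hKO : K ≠ O) :
    ∠ B₁ A₁ C₁ = ∠ B A C ∧ ∠ A₁ B₁ C₁ = ∠ A B C ∧ ∠ A₁ C₁ B₁ = ∠ A C B := by
  have hd := distsq_coord
  have hnv : ∀ P Q : Pt, ‖P -ᵥ Q‖ = dist P Q := fun P Q => (dist_eq_norm_vsub _ P Q).symm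
  have hAB : A ≠ B := fun h =>
    (by decide : ¬((0 : Fin 3) = 1)) (hABC.injective (by simpa using h))
  have hBC : B ≠ C := fun h =>
    (by decide : ¬((1 : Fin 3) = 2)) (hABC.injective (by simpa using h))
  have hCA : C ≠ A := fun h =>
    (by decide : ¬((2 : Fin 3) = 0)) (hABC.injective (by simpa using h))
  have hdAB : dist A B ≠ 0 := dist_ne_zero.2 hAB
  have hdBC : dist B C ≠ 0 := dist_ne_zero.2 hBC
  have hdAC : dist A C ≠ 0 := dist_ne_zero.2 (Ne.symm hCA)
  have hα : (B 0 - C 0)^2 + (B 1 - C 1)^2 ≠ 0 := hd B C ▸ pow_ne_zero 2 hdBC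
  have hβ : (A 0 - C 0)^2 + (A 1 - C 1)^2 ≠ 0 := hd A C ▸ pow_ne_zero 2 hdAC
  have hγ : (A 0 - B 0)^2 + (A 1 - B 1)^2 ≠ 0 := hd A B ▸ pow_ne_zero 2 hdAB
  obtain ⟨ta, hta⟩ := hA₁p
  obtain ⟨tb, htb⟩ := hB₁p
  obtain ⟨tc, htc⟩ := hC₁p
  have hta0 : K 0 - A₁ 0 = ta * (B 0 - C 0) := by simpa using congrArg (· 0) hta
  have hta1 : K 1 - A₁ 1 = ta * (B 1 - C 1) := by simpa using congrArg (· 1) hta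
  have htb0 : K 0 - B₁ 0 = tb * (C 0 - A 0) := by simpa using congrArg (· 0) htb
  have htb1 : K 1 - B₁ 1 = tb * (C 1 - A 1) := by simpa using congrArg (· 1) htb
  have htc0 : K 0 - C₁ 0 = tc * (A 0 - B 0) := by simpa using congrArg (· 0) htc
  have htc1 : K 1 - C₁ 1 = tc * (A 1 - B 1) := by simpa using congrArg (· 1) htc
  have eA : dist A₁ B = dist A₁ C := AffineSubspace.mem_perpBisector_iff_dist_eq.1 hA₁
  have eB : dist B₁ C = dist B₁ A := AffineSubspace.mem_perpBisector_iff_dist_eq.1 hB₁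
  have eC : dist C₁ A = dist C₁ B := AffineSubspace.mem_perpBisector_iff_dist_eq.1 hC₁
  have EA : (A₁ 0 - B 0)^2 + (A₁ 1 - B 1)^2 = (A₁ 0 - C 0)^2 + (A₁ 1 - C 1)^2 := by
    have h2 := congrArg (·^2) eA; rw [hd, hd] at h2; exact h2
  have EB : (B₁ 0 - C 0)^2 + (B₁ 1 - C 1)^2 = (B₁ 0 - A 0)^2 + (B₁ 1 - A 1)^2 := by
    have h2 := congrArg (·^2) eB; rw [hd, hd] at h2; exact h2
  have EC : (C₁ 0 - A 0)^2 + (C₁ 1 - A 1)^2 = (C₁ 0 - B 0)^2 + (C₁ 1 - B 1)^2 := by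
    have h2 := congrArg (·^2) eC; rw [hd, hd] at h2; exact h2
  obtain ⟨I1, I2⟩ := brocard_core (A 0 - C 0) (A 1 - C 1) (B 0 - C 0) (B 1 - C 1)
      (K 0 - C 0) (K 1 - C 1) (A₁ 0 - C 0) (A₁ 1 - C 1) (B₁ 0 - C 0) (B₁ 1 - C 1)
      (C₁ 0 - C 0) (C₁ 1 - C 1) ta tb tc
      hα hβ (fun h => hγ (by linear_combination h))
      (by linear_combination EA) (by linear_combination hta0) (by linear_combination hta1)
      (by linear_combination EB) (by linear_combination htb0) (by linear_combination htb1)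
      (by linear_combination EC) (by linear_combination htc0) (by linear_combination htc1)
  have D1 : dist B₁ C₁ ^2 * dist A B ^2 = dist A₁ B₁ ^2 * dist B C ^2 := by
    rw [hd B₁ C₁, hd A B, hd A₁ B₁, hd B C]; linear_combination I1
  have D2 : dist A₁ C₁ ^2 * dist A B ^2 = dist A₁ B₁ ^2 * dist A C ^2 := by
    rw [hd A₁ C₁, hd A B, hd A₁ B₁, hd A C]; linear_combination I2
  -- the cross product of B-C and C-A is nonzero (A, B, C not collinear)
  have hcr : (B 0 - C 0)*(C 1 - A 1) - (B 1 - C 1)*(C 0 - A 0) ≠ 0 := by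
    intro hc
    apply affineIndependent_iff_not_collinear_set.1 hABC
    rw [collinear_iff_of_mem (show C ∈ ({A, B, C} : Set Pt) by simp)]
    refine ⟨A -ᵥ C, fun p hp => ?_⟩
    rcases hp with h | h | h
    · exact ⟨1, by simp [h]⟩
    · have m0 : (B 0 - C 0) * ((A 0 - C 0)^2+(A 1 - C 1)^2)
          = ((B 0 - C 0)*(A 0 - C 0)+(B 1 - C 1)*(A 1 - C 1)) * (A 0 - C 0) := by
        linear_combination (-(A 1 - C 1)) * hc
      have m1 : (B 1 - C 1) * ((A 0 - C 0)^2+(A 1 - C 1)^2)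
          = ((B 0 - C 0)*(A 0 - C 0)+(B 1 - C 1)*(A 1 - C 1)) * (A 1 - C 1) := by
        linear_combination (A 0 - C 0) * hc
      set μ := ((B 0 - C 0)*(A 0 - C 0)+(B 1 - C 1)*(A 1 - C 1))/((A 0 - C 0)^2+(A 1 - C 1)^2)
        with hμ
      have q0 : μ * (A 0 - C 0) = B 0 - C 0 := by
        rw [hμ, div_mul_eq_mul_div, div_eq_iff hβ]; linear_combination - m0
      have q1 : μ * (A 1 - C 1) = B 1 - C 1 := by
        rw [hμ, div_mul_eq_mul_div, div_eq_iff hβ]; linear_combination - m1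
      refine ⟨μ, ?_⟩
      rw [h]
      have hc0 : (μ • (A -ᵥ C) +ᵥ C) 0 = μ*(A 0 - C 0) + C 0 := by
        simp [vsub_eq_sub, vadd_eq_add]
      have hc1 : (μ • (A -ᵥ C) +ᵥ C) 1 = μ*(A 1 - C 1) + C 1 := by
        simp [vsub_eq_sub, vadd_eq_add]
      have hsq : dist B (μ • (A -ᵥ C) +ᵥ C) ^ 2 = 0 := by
        rw [hd, hc0, hc1]
        linear_combination (μ*(A 0 - C 0) - B 0 + C 0)*q0 + (μ*(A 1 - C 1) - B 1 + C 1)*q1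
      exact dist_eq_zero.1 (pow_eq_zero_iff two_ne_zero |>.mp hsq)
    · rw [Set.mem_singleton_iff] at h; exact ⟨0, by simp [h]⟩
  -- nondegeneracy: A₁ ≠ B₁
  have hne : A₁ ≠ B₁ := by
    intro h
    have EB' : (A₁ 0 - C 0)^2 + (A₁ 1 - C 1)^2 = (A₁ 0 - A 0)^2 + (A₁ 1 - A 1)^2 := by
      rw [h]; exact EB
    have EO1 : (O 0 - A 0)^2 + (O 1 - A 1)^2 = (O 0 - B 0)^2 + (O 1 - B 1)^2 := by
      have h2 := congrArg (·^2) hO1; rw [hd, hd] at h2; exact h2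
    have EO2 : (O 0 - B 0)^2 + (O 1 - B 1)^2 = (O 0 - C 0)^2 + (O 1 - C 1)^2 := by
      have h2 := congrArg (·^2) hO2; rw [hd, hd] at h2; exact h2
    have L1 : (O 0 - A₁ 0)*(B 0 - C 0) + (O 1 - A₁ 1)*(B 1 - C 1) = 0 := by
      linear_combination (1/2)*EA - (1/2)*EO2
    have L2 : (O 0 - A₁ 0)*(C 0 - A 0) + (O 1 - A₁ 1)*(C 1 - A 1) = 0 := by
      linear_combination (1/2)*EB' + (1/2)*EO1 + (1/2)*EO2
    have h50 : (O 0 - A₁ 0) * ((B 0 - C 0)*(C 1 - A 1) - (B 1 - C 1)*(C 0 - A 0)) = 0 := by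
      linear_combination (C 1 - A 1)*L1 - (B 1 - C 1)*L2
    have h51 : (O 1 - A₁ 1) * ((B 0 - C 0)*(C 1 - A 1) - (B 1 - C 1)*(C 0 - A 0)) = 0 := by
      linear_combination (B 0 - C 0)*L2 - (C 0 - A 0)*L1
    have hx0 : O 0 = A₁ 0 := by
      have := (mul_eq_zero.1 h50).resolve_right hcr; linarith
    have hx1 : O 1 = A₁ 1 := by
      have := (mul_eq_zero.1 h51).resolve_right hcr; linarith
    have u0 : K 0 - O 0 = ta * (B 0 - C 0) := by rw [hx0]; exact hta0
    have u1 : K 1 - O 1 = ta * (B 1 - C 1) := by rw [hx1]; exact hta1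
    have v0 : K 0 - O 0 = tb * (C 0 - A 0) := by rw [hx0, h]; exact htb0
    have v1 : K 1 - O 1 = tb * (C 1 - A 1) := by rw [hx1, h]; exact htb1
    have hKO2 : dist K O ^ 2 ≠ 0 := pow_ne_zero 2 (dist_ne_zero.2 hKO)
    rw [hd] at hKO2
    have httc : ta * tb * ((B 0 - C 0)*(C 1 - A 1) - (B 1 - C 1)*(C 0 - A 0)) = 0 := by
      linear_combination (tb*(C 1 - A 1))*(u0.symm.trans v0) - (tb*(C 0 - A 0))*(u1.symm.trans v1)
    rcases mul_eq_zero.1 ((mul_eq_zero.1 httc).resolve_right hcr) with hta' | htb'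
    · apply hKO2
      rw [hta', zero_mul] at u0 u1
      rw [u0, u1]; ring
    · apply hKO2
      rw [htb', zero_mul] at v0 v1
      rw [v0, v1]; ring
  -- the similarity ratio
  have hpos : 0 < dist A₁ B₁ := dist_pos.2 hne
  set k : ℝ := dist A₁ B₁ / dist A B with hk
  have hkpos : 0 < k := div_pos hpos (lt_of_le_of_ne dist_nonneg (Ne.symm hdAB))
  have hk2 : k^2 = dist A₁ B₁^2 / dist A B^2 := by rw [hk, div_pow]
  have r3 : dist A₁ B₁ = k * dist A B := by rw [hk]; field_simp
  have r1 : dist B₁ C₁ = k * dist B C := by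
    apply sq_cancel dist_nonneg (by positivity)
    rw [mul_pow, hk2, div_mul_eq_mul_div, eq_div_iff (pow_ne_zero 2 hdAB)]
    linear_combination D1
  have r2 : dist A₁ C₁ = k * dist A C := by
    apply sq_cancel dist_nonneg (by positivity)
    rw [mul_pow, hk2, div_mul_eq_mul_div, eq_div_iff (pow_ne_zero 2 hdAB)]
    linear_combination D2
  refine ⟨?_, ?_, ?_⟩
  · show InnerProductGeometry.angle (B₁ -ᵥ A₁) (C₁ -ᵥ A₁)
      = InnerProductGeometry.angle (B -ᵥ A) (C -ᵥ A)
    apply angle_of_ratio _ _ _ _ k hkpos.ne'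
    · rw [hnv, hnv, dist_comm B₁ A₁, dist_comm B A]; exact r3
    · rw [hnv, hnv, dist_comm C₁ A₁, dist_comm C A]; exact r2
    · rw [vsub_sub_vsub_cancel_right, vsub_sub_vsub_cancel_right, hnv, hnv]; exact r1
  · show InnerProductGeometry.angle (A₁ -ᵥ B₁) (C₁ -ᵥ B₁)
      = InnerProductGeometry.angle (A -ᵥ B) (C -ᵥ B)
    apply angle_of_ratio _ _ _ _ k hkpos.ne'
    · rw [hnv, hnv]; exact r3
    · rw [hnv, hnv, dist_comm C₁ B₁, dist_comm C B]; exact r1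
    · rw [vsub_sub_vsub_cancel_right, vsub_sub_vsub_cancel_right, hnv, hnv]; exact r2
  · show InnerProductGeometry.angle (A₁ -ᵥ C₁) (B₁ -ᵥ C₁)
      = InnerProductGeometry.angle (A -ᵥ C) (B -ᵥ C)
    apply angle_of_ratio _ _ _ _ k hkpos.ne'
    · rw [hnv, hnv]; exact r2
    · rw [hnv, hnv]; exact r1
    · rw [vsub_sub_vsub_cancel_right, vsub_sub_vsub_cancel_right, hnv, hnv]; exact r3
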